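/- Let f(i) = (ℓ+3i+2)/(ℓ+3i+3). Then for ℓ ≥ 1, log(α^(M)(ℓ)) = −Σ_{i=0}^{ℓ−1} log(1 + 1/(ℓ+3i+2)), and this sum satisfies (1/3)·log((4ℓ+3)/(ℓ+3)) ≤ Σ_{i=0}^{ℓ−1} log(1 + 1/(ℓ+3i+2)) ≤ (1/3)·log((4ℓ+2)/(ℓ+2)) + C/ℓ for some absolute constant C. -/

import Mathlib

lemma aux_log_le {x : ℝ} (hx : 0 ≤ x) : Real.log (1 + x) ≤ x := by
  have := Real.log_le_sub_one_of_pos (by linarith : (0:ℝ) < 1 + x)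
  linarith

lemma aux_le_log {x : ℝ} (hx : 0 ≤ x) : x / (1 + x) ≤ Real.log (1 + x) := by
  have h1 : (0:ℝ) < 1 + x := by linarith
  have h2 := Real.log_le_sub_one_of_pos (show (0:ℝ) < (1+x)⁻¹ by positivity)
  rw [Real.log_inv] at h2
  have h3 : x / (1 + x) = 1 - (1+x)⁻¹ := by field_simp; ring
  linarith

lemma aux_lower_term {n : ℝ} (hn : 3 ≤ n) :
    (1/3) * (Real.log (n+4) - Real.log (n+1)) ≤ Real.log (1 + 1/n) := by
  have h0 : (0:ℝ) < n := by linarith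
  have e1 : Real.log (n+4) - Real.log (n+1) = Real.log (1 + 3/(n+1)) := by
    rw [← Real.log_div (by linarith) (by linarith)]
    congr 1
    field_simp
    ring
  rw [e1]
  have h2 : Real.log (1 + 3/(n+1)) ≤ 3/(n+1) := aux_log_le (by positivity)
  have h3 : (1/n)/(1 + 1/n) ≤ Real.log (1 + 1/n) := aux_le_log (by positivity)
  have h4 : (1/n)/(1 + 1/n) = 1/(n+1) := by field_simp
  have hb : (1/3:ℝ) * (3/(n+1)) = 1/(n+1) := by ring
  rw [h4] at h3
  linarith [hb]

lemma aux_upper_term {n L : ℝ} (hL : 1 ≤ L) (hnL : L + 2 ≤ n) :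
    Real.log (1 + 1/n) ≤ (1/3) * (Real.log (n+3) - Real.log n) + 3/L^2 := by
  have h0 : (0:ℝ) < n := by linarith
  have hLp : (0:ℝ) < L := by linarith
  have e1 : Real.log (n+3) - Real.log n = Real.log (1 + 3/n) := by
    rw [← Real.log_div (by linarith) (by linarith)]
    congr 1
    field_simp
  rw [e1]
  have h2 : Real.log (1 + 1/n) ≤ 1/n := aux_log_le (by positivity)
  have h3 : (3/n)/(1 + 3/n) ≤ Real.log (1 + 3/n) := aux_le_log (by positivity)
  have h4 : (3/n)/(1 + 3/n) = 3/(n+3) := by field_simp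
  rw [h4] at h3
  have key : 1/n - 1/(n+3) ≤ 3/L^2 := by
    have e2 : 1/n - 1/(n+3) = 3/(n*(n+3)) := by field_simp; ring
    rw [e2]
    have hsq : L^2 ≤ n*(n+3) := by nlinarith
    gcongr
  have hb : (1/3:ℝ) * (3/(n+3)) = 1/(n+3) := by ring
  linarith [hb]

theorem stmt16 :
    ∃ C : ℝ, ∀ ℓ : ℕ, 1 ≤ ℓ →
      Real.log (∏ i ∈ Finset.range ℓ,
          ((ℓ : ℝ) + 3 * i + 2) / ((ℓ : ℝ) + 3 * i + 3)) =
        -∑ i ∈ Finset.range ℓ, Real.log (1 + 1 / ((ℓ : ℝ) + 3 * i + 2)) ∧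
      (1 / 3) * Real.log ((4 * (ℓ : ℝ) + 3) / ((ℓ : ℝ) + 3)) ≤
        ∑ i ∈ Finset.range ℓ, Real.log (1 + 1 / ((ℓ : ℝ) + 3 * i + 2)) ∧
      ∑ i ∈ Finset.range ℓ, Real.log (1 + 1 / ((ℓ : ℝ) + 3 * i + 2)) ≤
        (1 / 3) * Real.log ((4 * (ℓ : ℝ) + 2) / ((ℓ : ℝ) + 2)) + C / ℓ := by
  refine ⟨3, fun ℓ hℓ => ?_⟩
  have hL1 : (1:ℝ) ≤ (ℓ:ℝ) := by exact_mod_cast hℓ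
  have hLp : (0:ℝ) < (ℓ:ℝ) := by linarith
  have hpos : ∀ i : ℕ, (0:ℝ) < (ℓ:ℝ) + 3*i + 2 := by
    intro i
    have : (0:ℝ) ≤ (i:ℝ) := Nat.cast_nonneg i
    linarith
  refine ⟨?_, ?_, ?_⟩
  · -- equality
    rw [Real.log_prod]
    · rw [← Finset.sum_neg_distrib]
      apply Finset.sum_congr rfl
      intro i _
      have hn := hpos i
      have e : (1 : ℝ) + 1/((ℓ:ℝ)+3*i+2) = ((ℓ:ℝ)+3*i+3)/((ℓ:ℝ)+3*i+2) := by
        field_simp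
        ring
      rw [e, ← Real.log_inv, inv_div]
    · intro i _
      have hn := hpos i
      positivity
  · -- lower bound
    set g : ℕ → ℝ := fun i => Real.log ((ℓ:ℝ)+3*i+3) with hg
    have egl : g ℓ = Real.log (4*(ℓ:ℝ)+3) := by
      simp only [hg]; congr 1; push_cast; ring
    have eg0 : g 0 = Real.log ((ℓ:ℝ)+3) := by
      simp only [hg]; congr 1; push_cast; ring
    have hterm : ∀ i : ℕ, (1/3)*(g (i+1) - g i) ≤ Real.log (1 + 1/((ℓ:ℝ)+3*i+2)) := by
      intro i
      have hi : (0:ℝ) ≤ (i:ℝ) := Nat.cast_nonneg i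
      have h := aux_lower_term (n := (ℓ:ℝ)+3*i+2) (by linarith)
      have eg1 : g (i+1) = Real.log (((ℓ:ℝ)+3*i+2)+4) := by
        simp only [hg]; congr 1; push_cast; ring
      have eg2 : g i = Real.log (((ℓ:ℝ)+3*i+2)+1) := by
        simp only [hg]; congr 1; ring
      rw [eg1, eg2]
      exact h
    calc (1/3:ℝ) * Real.log ((4*(ℓ:ℝ)+3)/((ℓ:ℝ)+3))
        = (1/3) * (g ℓ - g 0) := by
          rw [egl, eg0, Real.log_div (by linarith) (by linarith)]
      _ = (1/3) * ∑ i ∈ Finset.range ℓ, (g (i+1) - g i) := by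
          rw [Finset.sum_range_sub]
      _ = ∑ i ∈ Finset.range ℓ, (1/3) * (g (i+1) - g i) := by
          rw [Finset.mul_sum]
      _ ≤ ∑ i ∈ Finset.range ℓ, Real.log (1 + 1/((ℓ:ℝ)+3*i+2)) :=
          Finset.sum_le_sum (fun i _ => hterm i)
  · -- upper bound
    set g : ℕ → ℝ := fun i => Real.log ((ℓ:ℝ)+3*i+2) with hg
    have egl : g ℓ = Real.log (4*(ℓ:ℝ)+2) := by
      simp only [hg]; congr 1; push_cast; ring
    have eg0 : g 0 = Real.log ((ℓ:ℝ)+2) := by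
      simp only [hg]; congr 1; push_cast; ring
    have hterm : ∀ i : ℕ, Real.log (1 + 1/((ℓ:ℝ)+3*i+2)) ≤
        (1/3)*(g (i+1) - g i) + 3/(ℓ:ℝ)^2 := by
      intro i
      have hi : (0:ℝ) ≤ (i:ℝ) := Nat.cast_nonneg i
      have h := aux_upper_term (n := (ℓ:ℝ)+3*i+2) hL1 (by linarith)
      have eg1 : g (i+1) = Real.log (((ℓ:ℝ)+3*i+2)+3) := by
        simp only [hg]; congr 1; push_cast; ring
      have eg2 : g i = Real.log ((ℓ:ℝ)+3*i+2) := by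
        simp only [hg]
      rw [eg1, eg2]
      exact h
    calc ∑ i ∈ Finset.range ℓ, Real.log (1 + 1/((ℓ:ℝ)+3*i+2))
        ≤ ∑ i ∈ Finset.range ℓ, ((1/3)*(g (i+1) - g i) + 3/(ℓ:ℝ)^2) :=
          Finset.sum_le_sum (fun i _ => hterm i)
      _ = (1/3) * ∑ i ∈ Finset.range ℓ, (g (i+1) - g i) + (ℓ:ℝ) * (3/(ℓ:ℝ)^2) := by
          rw [Finset.sum_add_distrib, ← Finset.mul_sum, Finset.sum_const,
            Finset.card_range, nsmul_eq_mul]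
      _ = (1/3) * Real.log ((4*(ℓ:ℝ)+2)/((ℓ:ℝ)+2)) + 3/(ℓ:ℝ) := by
          rw [Finset.sum_range_sub, egl, eg0,
            Real.log_div (by linarith) (by linarith)]
          congr 1
          field_simp
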